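/- Let (A_n) be a sequence of operators on Banach spaces X_n with μ ∈ ρ(A_n) for all n and sup_n ‖R(μ, A_n)‖ ≤ K, and let E_n : X_n → X, P_n : X → X_n be bounded operators with sup_n ‖E_n‖ < ∞ and sup_n ‖P_n‖ < ∞. If E_n R(μ, A_n) P_n x converges for every x ∈ X, then for every λ with |μ − λ| < 1/K, the sequence E_n R(λ, A_n) P_n x converges for every x ∈ X (where λ ∈ ρ(A_n) for all n), and the convergence is uniform in λ on each disc |μ − λ| ≤ α/K, 0 < α < 1. -/

import Mathlib

open Filter

set_option maxHeartbeats 1000000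

/-- If `sup_n ‖R(μ,A_n)‖ ≤ K`, the operators `E_n, P_n` are uniformly
bounded with `P_n E_n = Id`, and `E_n R(μ,A_n) P_n x` converges for every `x`, then for
every `λ` with `|μ−λ| < 1/K` the sequence `E_n R(λ,A_n) P_n x` (with
`R(λ,A_n) = Σ_k (μ−λ)^k R(μ,A_n)^{k+1}`) converges for every `x`, uniformly in `λ` on
each disc `|μ−λ| ≤ α/K`, `0 < α < 1`. -/
theorem resolvent_strong_convergence_propagates
    {X : Type*} [NormedAddCommGroup X] [NormedSpace ℂ X] [CompleteSpace X]
    {Xn : ℕ → Type*} [∀ n, NormedAddCommGroup (Xn n)] [∀ n, NormedSpace ℂ (Xn n)]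
    [∀ n, CompleteSpace (Xn n)]
    (Rn : ∀ n, Xn n →L[ℂ] Xn n) (mu : ℂ) (K : ℝ) (hK : 0 < K)
    (hRn : ∀ n, ‖Rn n‖ ≤ K)
    (E : ∀ n, Xn n →L[ℂ] X) (P : ∀ n, X →L[ℂ] Xn n)
    (ME MP : ℝ) (hE : ∀ n, ‖E n‖ ≤ ME) (hP : ∀ n, ‖P n‖ ≤ MP)
    (hPE : ∀ n, (P n).comp (E n) = ContinuousLinearMap.id ℂ (Xn n))
    (hconv : ∀ x : X, ∃ y : X,
      Tendsto (fun n => E n (Rn n (P n x))) atTop (nhds y))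
    (x : X) :
    ∃ f : ℂ → X,
      (∀ lam : ℂ, ‖mu - lam‖ < 1 / K →
        Tendsto
          (fun n => E n ((∑' k : ℕ, (mu - lam) ^ k • (Rn n) ^ (k + 1)) (P n x)))
          atTop (nhds (f lam))) ∧
      (∀ α : ℝ, 0 < α → α < 1 →
        TendstoUniformlyOn
          (fun (n : ℕ) (lam : ℂ) =>
            E n ((∑' k : ℕ, (mu - lam) ^ k • (Rn n) ^ (k + 1)) (P n x)))
          f atTop {lam : ℂ | ‖mu - lam‖ ≤ α / K}) := by
  classical
  have hME : (0:ℝ) ≤ ME := (norm_nonneg (E 0)).trans (hE 0)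
  have hMP : (0:ℝ) ≤ MP := (norm_nonneg (P 0)).trans (hP 0)
  have hEb : ∀ n (z : Xn n), ‖E n z‖ ≤ ME * ‖z‖ := fun n z =>
    ((E n).le_opNorm z).trans (mul_le_mul_of_nonneg_right (hE n) (norm_nonneg z))
  have hPb : ∀ n (z : X), ‖P n z‖ ≤ MP * ‖z‖ := fun n z =>
    ((P n).le_opNorm z).trans (mul_le_mul_of_nonneg_right (hP n) (norm_nonneg z))
  have hRpow : ∀ n k, ‖(Rn n) ^ (k+1)‖ ≤ K ^ (k+1) := by
    intro n k
    refine (norm_pow_le' (Rn n) (Nat.succ_pos k)).trans ?_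
    exact pow_le_pow_left₀ (norm_nonneg _) (hRn n) _
  have hRb : ∀ n k (z : Xn n), ‖((Rn n) ^ (k+1)) z‖ ≤ K ^ (k+1) * ‖z‖ := fun n k z =>
    (((Rn n) ^ (k+1)).le_opNorm z).trans
      (mul_le_mul_of_nonneg_right (hRpow n k) (norm_nonneg z))
  -- the uniform strong bound on `E_n R_n^{k+1} P_n`
  have hchain : ∀ n k (w : X), ‖E n (((Rn n) ^ (k+1)) (P n w))‖
      ≤ ME * (K ^ (k+1) * (MP * ‖w‖)) := by
    intro n k w
    refine (hEb n _).trans (mul_le_mul_of_nonneg_left ?_ hME)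
    refine (hRb n k _).trans (mul_le_mul_of_nonneg_left (hPb n w) ?_)
    positivity
  have hPEa : ∀ n (z : Xn n), P n (E n z) = z := by
    intro n z
    have := DFunLike.congr_fun (hPE n) z
    simpa using this
  -- the strong limit operator
  let S : X → X := fun y => (hconv y).choose
  have hS : ∀ y, Tendsto (fun n => E n (Rn n (P n y))) atTop (nhds (S y)) :=
    fun y => (hconv y).choose_spec
  -- strong convergence of "powers"
  have hpow : ∀ k, ∀ y : X,
      Tendsto (fun n => E n (((Rn n) ^ (k+1)) (P n y))) atTop (nhds (S^[k+1] y)) := by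
    intro k
    induction k with
    | zero =>
        intro y
        simpa [pow_one] using hS y
    | succ k ih =>
        intro y
        have key : ∀ n, E n (((Rn n) ^ (k+1+1)) (P n y))
            = E n (((Rn n) ^ (k+1)) (P n (E n (Rn n (P n y))))) := by
          intro n
          rw [hPEa n (Rn n (P n y)), ← ContinuousLinearMap.mul_apply, ← pow_succ]
        have hit : S^[k+1+1] y = S^[k+1] (S y) := by
          rw [Function.iterate_succ_apply]
        have hlim := hS y
        have hy' := ih (S y)
        have ha : Tendsto (fun n => ‖E n (Rn n (P n y)) - S y‖) atTop (nhds 0) :=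
          tendsto_iff_norm_sub_tendsto_zero.mp hlim
        have hb' : Tendsto (fun n => ‖E n (((Rn n) ^ (k+1)) (P n (S y))) - S^[k+1] (S y)‖)
            atTop (nhds 0) := tendsto_iff_norm_sub_tendsto_zero.mp hy'
        rw [tendsto_iff_norm_sub_tendsto_zero]
        have hbnd : ∀ n, ‖E n (((Rn n) ^ (k+1+1)) (P n y)) - S^[k+1+1] y‖
            ≤ ME * (K ^ (k+1) * (MP * ‖E n (Rn n (P n y)) - S y‖))
              + ‖E n (((Rn n) ^ (k+1)) (P n (S y))) - S^[k+1] (S y)‖ := by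
          intro n
          have h1 : E n (((Rn n) ^ (k+1+1)) (P n y)) - S^[k+1+1] y
              = E n (((Rn n) ^ (k+1)) (P n (E n (Rn n (P n y)) - S y)))
                + (E n (((Rn n) ^ (k+1)) (P n (S y))) - S^[k+1] (S y)) := by
            rw [key n, hit, map_sub, map_sub, map_sub]
            abel
          rw [h1]
          refine (norm_add_le _ _).trans ?_
          exact add_le_add (hchain n k _) le_rfl
        have h2 : Tendsto (fun n =>
            ME * (K ^ (k+1) * (MP * ‖E n (Rn n (P n y)) - S y‖))
              + ‖E n (((Rn n) ^ (k+1)) (P n (S y))) - S^[k+1] (S y)‖) atTop (nhds 0) := by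
          have := (((ha.const_mul MP).const_mul (K ^ (k+1))).const_mul ME).add hb'
          simpa using this
        exact squeeze_zero (fun n => norm_nonneg _) hbnd h2
  -- bound on the limits
  have hvb : ∀ k, ‖S^[k+1] x‖ ≤ ME * (K ^ (k+1) * (MP * ‖x‖)) := by
    intro k
    exact le_of_tendsto (hpow k x).norm
      (Eventually.of_forall fun n => hchain n k x)
  set C : ℝ := ME * (K * (MP * ‖x‖)) with hCdef
  have hC : 0 ≤ C := by positivity
  have hkey : ∀ α : ℝ, ∀ k : ℕ,
      (α / K) ^ k * (ME * (K ^ (k+1) * (MP * ‖x‖))) = C * α ^ k := by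
    intro α k
    rw [div_pow, pow_succ, hCdef]
    field_simp
  -- the limit function
  have huni : ∀ α : ℝ, 0 < α → α < 1 →
      TendstoUniformlyOn
        (fun (n : ℕ) (lam : ℂ) =>
          E n ((∑' k : ℕ, (mu - lam) ^ k • (Rn n) ^ (k + 1)) (P n x)))
        (fun lam => ∑' k : ℕ, (mu - lam) ^ k • S^[k+1] x)
        atTop {lam : ℂ | ‖mu - lam‖ ≤ α / K} := by
    intro α hα0 hα1
    have hrepr : ∀ n (lam : ℂ), ‖mu - lam‖ * K < 1 →
        E n ((∑' k : ℕ, (mu - lam) ^ k • (Rn n) ^ (k + 1)) (P n x))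
          = ∑' k : ℕ, (mu - lam) ^ k • E n (((Rn n) ^ (k+1)) (P n x)) := by
      intro n lam h
      have hFs : Summable (fun k : ℕ => (mu - lam) ^ k • (Rn n) ^ (k+1)) := by
        refine Summable.of_norm_bounded (g := fun k => K * (‖mu - lam‖ * K) ^ k)
          ((summable_geometric_of_lt_one (by positivity) h).mul_left K) ?_
        intro k
        refine (ContinuousLinearMap.opNorm_smul_le _ _).trans ?_
        rw [norm_pow]
        calc ‖mu - lam‖ ^ k * ‖(Rn n) ^ (k+1)‖
            ≤ ‖mu - lam‖ ^ k * K ^ (k+1) :=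
              mul_le_mul_of_nonneg_left (hRpow n k) (by positivity)
          _ = K * (‖mu - lam‖ * K) ^ k := by rw [mul_pow, pow_succ]; ring
      have h1 := (ContinuousLinearMap.apply ℂ (Xn n) (P n x)).hasSum hFs.hasSum
      simp only [ContinuousLinearMap.apply_apply] at h1
      have h2 := (E n).hasSum h1
      simp only [ContinuousLinearMap.smul_apply, map_smul] at h2
      exact h2.tsum_eq.symm
    rw [Metric.tendstoUniformlyOn_iff]
    intro ε hε
    set D : ℝ := 2 * C * (1 - α)⁻¹ with hDdef
    have hD : 0 ≤ D := by
      have h1 : (0:ℝ) ≤ (1 - α)⁻¹ := inv_nonneg.mpr (by linarith)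
      rw [hDdef]
      exact mul_nonneg (by positivity) h1
    obtain ⟨N, hN⟩ : ∃ N : ℕ, D * α ^ N < ε / 2 := by
      have h0 : Tendsto (fun N : ℕ => D * α ^ N) atTop (nhds 0) := by
        simpa using (tendsto_pow_atTop_nhds_zero_of_lt_one hα0.le hα1).const_mul D
      exact (h0.eventually (gt_mem_nhds (by positivity : (0:ℝ) < ε / 2))).exists
    have hfin : Tendsto (fun n => ∑ k ∈ Finset.range N,
        (α / K) ^ k * ‖S^[k+1] x - E n (((Rn n) ^ (k+1)) (P n x))‖) atTop (nhds 0) := by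
      have hterm : ∀ k, Tendsto (fun n =>
          (α / K) ^ k * ‖S^[k+1] x - E n (((Rn n) ^ (k+1)) (P n x))‖) atTop (nhds 0) := by
        intro k
        have := tendsto_iff_norm_sub_tendsto_zero.mp (hpow k x)
        have h' : Tendsto (fun n => ‖S^[k+1] x - E n (((Rn n) ^ (k+1)) (P n x))‖)
            atTop (nhds 0) := by
          simpa [norm_sub_rev] using this
        simpa using h'.const_mul ((α / K) ^ k)
      have := tendsto_finset_sum (Finset.range N) (fun k _ => hterm k)
      simpa using this
    filter_upwards [hfin.eventually (gt_mem_nhds (by positivity : (0:ℝ) < ε / 2))]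
      with n hn lam hlam
    have hlam' : ‖mu - lam‖ ≤ α / K := hlam
    have hlamK : ‖mu - lam‖ * K < 1 := by
      have : ‖mu - lam‖ * K ≤ α := by
        rw [← le_div_iff₀ hK]; exact hlam'
      exact this.trans_lt hα1
    rw [dist_eq_norm, hrepr n lam hlamK]
    -- bounds on the terms
    have hbu : ∀ k, ‖(mu - lam) ^ k • E n (((Rn n) ^ (k+1)) (P n x))‖ ≤ C * α ^ k := by
      intro k
      rw [norm_smul, norm_pow]
      calc ‖mu - lam‖ ^ k * ‖E n (((Rn n) ^ (k+1)) (P n x))‖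
          ≤ (α / K) ^ k * (ME * (K ^ (k+1) * (MP * ‖x‖))) := by
            apply mul_le_mul (pow_le_pow_left₀ (norm_nonneg _) hlam' k) (hchain n k x)
              (norm_nonneg _) (by positivity)
        _ = C * α ^ k := hkey α k
    have hbv : ∀ k, ‖(mu - lam) ^ k • S^[k+1] x‖ ≤ C * α ^ k := by
      intro k
      rw [norm_smul, norm_pow]
      calc ‖mu - lam‖ ^ k * ‖S^[k+1] x‖
          ≤ (α / K) ^ k * (ME * (K ^ (k+1) * (MP * ‖x‖))) := by
            apply mul_le_mul (pow_le_pow_left₀ (norm_nonneg _) hlam' k) (hvb k)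
              (norm_nonneg _) (by positivity)
        _ = C * α ^ k := hkey α k
    have hgeo : Summable (fun k : ℕ => C * α ^ k) :=
      (summable_geometric_of_lt_one hα0.le hα1).mul_left C
    have hu_sum : Summable (fun k : ℕ => (mu - lam) ^ k • E n (((Rn n) ^ (k+1)) (P n x))) :=
      Summable.of_norm_bounded hgeo hbu
    have hv_sum : Summable (fun k : ℕ => (mu - lam) ^ k • S^[k+1] x) :=
      Summable.of_norm_bounded hgeo hbv
    set w : ℕ → X := fun k => S^[k+1] x - E n (((Rn n) ^ (k+1)) (P n x)) with hwdef
    have hdiff : (∑' k : ℕ, (mu - lam) ^ k • S^[k+1] x)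
        - (∑' k : ℕ, (mu - lam) ^ k • E n (((Rn n) ^ (k+1)) (P n x)))
        = ∑' k : ℕ, (mu - lam) ^ k • w k := by
      rw [← Summable.tsum_sub hv_sum hu_sum]
      congr 1
      funext k
      rw [hwdef, smul_sub]
    rw [hdiff]
    have hbw : ∀ k, ‖(mu - lam) ^ k • w k‖ ≤ 2 * (C * α ^ k) := by
      intro k
      rw [norm_smul, norm_pow]
      calc ‖mu - lam‖ ^ k * ‖w k‖
          ≤ (α / K) ^ k * (ME * (K ^ (k+1) * (MP * ‖x‖)) + ME * (K ^ (k+1) * (MP * ‖x‖))) := by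
            apply mul_le_mul (pow_le_pow_left₀ (norm_nonneg _) hlam' k)
              ((norm_sub_le _ _).trans (add_le_add (hvb k) (hchain n k x)))
              (norm_nonneg _) (by positivity)
        _ = 2 * (C * α ^ k) := by
            rw [show ME * (K ^ (k+1) * (MP * ‖x‖)) + ME * (K ^ (k+1) * (MP * ‖x‖))
                = 2 * (ME * (K ^ (k+1) * (MP * ‖x‖))) by ring,
              mul_left_comm, hkey α k]
    have hw_sum : Summable (fun k : ℕ => (mu - lam) ^ k • w k) := by
      refine Summable.of_norm_bounded (hgeo.mul_left 2) ?_
      intro k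
      simpa [mul_assoc] using hbw k
    rw [← Summable.sum_add_tsum_nat_add N hw_sum]
    refine lt_of_le_of_lt (norm_add_le _ _) ?_
    have hA : ‖∑ k ∈ Finset.range N, (mu - lam) ^ k • w k‖
        ≤ ∑ k ∈ Finset.range N, (α / K) ^ k * ‖w k‖ := by
      refine (norm_sum_le _ _).trans (Finset.sum_le_sum fun k _ => ?_)
      rw [norm_smul, norm_pow]
      exact mul_le_mul_of_nonneg_right (pow_le_pow_left₀ (norm_nonneg _) hlam' k)
        (norm_nonneg _)
    have hB : ‖∑' k : ℕ, (mu - lam) ^ (k + N) • w (k + N)‖ ≤ D * α ^ N := by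
      have hsn : Summable (fun k : ℕ => ‖(mu - lam) ^ (k + N) • w (k + N)‖) := by
        refine Summable.of_nonneg_of_le (fun k => norm_nonneg _)
          (fun k => hbw (k + N)) ?_
        have : Summable (fun k : ℕ => (2 * (C * α ^ N)) * α ^ k) :=
          (summable_geometric_of_lt_one hα0.le hα1).mul_left _
        refine this.congr fun k => ?_
        rw [pow_add]; ring
      refine (norm_tsum_le_tsum_norm hsn).trans ?_
      have hmaj : Summable (fun k : ℕ => (2 * (C * α ^ N)) * α ^ k) :=
        (summable_geometric_of_lt_one hα0.le hα1).mul_left _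
      have h1 : ∑' k : ℕ, ‖(mu - lam) ^ (k + N) • w (k + N)‖
          ≤ ∑' k : ℕ, (2 * (C * α ^ N)) * α ^ k := by
        refine Summable.tsum_le_tsum (fun k => ?_) hsn hmaj
        refine (hbw (k + N)).trans_eq ?_
        rw [pow_add]; ring
      refine h1.trans_eq ?_
      rw [tsum_mul_left, tsum_geometric_of_lt_one hα0.le hα1, hDdef]
      ring
    calc ‖∑ k ∈ Finset.range N, (mu - lam) ^ k • w k‖
          + ‖∑' k : ℕ, (mu - lam) ^ (k + N) • w (k + N)‖
        ≤ (∑ k ∈ Finset.range N, (α / K) ^ k * ‖w k‖) + D * α ^ N := add_le_add hA hB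
      _ < ε / 2 + ε / 2 := add_lt_add hn hN
      _ = ε := add_halves ε
  refine ⟨fun lam => ∑' k : ℕ, (mu - lam) ^ k • S^[k+1] x, ?_, huni⟩
  intro lam hlam
  have hlam1 : K * ‖mu - lam‖ < 1 := by
    rw [mul_comm]
    rw [lt_div_iff₀ hK] at hlam
    exact hlam
  set α : ℝ := max (1/2) (K * ‖mu - lam‖) with hαdef
  have hα0 : 0 < α := lt_of_lt_of_le (by norm_num) (le_max_left _ _)
  have hα1 : α < 1 := max_lt (by norm_num) hlam1
  have hmem : lam ∈ {lam : ℂ | ‖mu - lam‖ ≤ α / K} := by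
    show ‖mu - lam‖ ≤ α / K
    rw [le_div_iff₀ hK]
    calc ‖mu - lam‖ * K = K * ‖mu - lam‖ := mul_comm _ _
      _ ≤ α := le_max_right _ _
  exact (huni α hα0 hα1).tendsto_at hmem
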